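/- With notation as in the eigenvector construction for the matrix B associated with D_n (n ≡ 0 mod 4, n ≥ 8): for each k ∈ {1,…,n−1}\{n/2} with α_k = (2k−1)π/(2(n−1)), letting a_m = 1 + Σ_{t=1}^{m−1} 2cos(4tα_k) and c_m = Σ_{t=0}^{m−1} 2cos((4t+2)α_k) with m = n/4, one has c_m = a_m. -/

import Mathlib

/-- The angle `α_k = (2k-1)π/(2(n-1))`. -/
noncomputable def alphaAng (n k : ℕ) : ℝ := (2 * (k : ℝ) - 1) * Real.pi / (2 * ((n : ℝ) - 1))

open Real Finset

lemma tel_c (α : ℝ) (m : ℕ) :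
    (∑ t ∈ Finset.range m, 2 * Real.cos ((4 * (t : ℝ) + 2) * α)) * Real.sin (2 * α)
      = Real.sin (4 * (m : ℝ) * α) := by
  induction m with
  | zero => simp
  | succ m ih =>
    rw [Finset.sum_range_succ, add_mul, ih]
    have h1 : (4 * ((m:ℝ)+1)) * α = ((4*(m:ℝ)+2)*α + 2*α) := by push_cast; ring
    have h2 : (4 * (m:ℝ)) * α = ((4*(m:ℝ)+2)*α - 2*α) := by ring
    push_cast
    rw [show (4 * ((m:ℝ)+1)) * α = ((4*(m:ℝ)+2)*α + 2*α) by ring, h2,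
      Real.sin_add, Real.sin_sub]
    ring

lemma tel_a (α : ℝ) (j : ℕ) :
    (1 + ∑ t ∈ Finset.range j, 2 * Real.cos (4 * ((t : ℝ)+1) * α)) * Real.sin (2 * α)
      = Real.sin ((4 * (j : ℝ) + 2) * α) := by
  induction j with
  | zero => simp
  | succ j ih =>
    rw [Finset.sum_range_succ, ← add_assoc, add_mul, ih]
    push_cast
    rw [show (4*((j:ℝ)+1))*α = ((4*(j:ℝ)+4)*α) by ring,
      show (4*((j:ℝ)+1)+2)*α = ((4*(j:ℝ)+4)*α + 2*α) by ring,
      show (4*(j:ℝ)+2)*α = ((4*(j:ℝ)+4)*α - 2*α) by ring,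
      Real.sin_add, Real.sin_sub]
    ring

theorem stmt15 (n k : ℕ) (h4 : n % 4 = 0) (h8 : 8 ≤ n)
    (hk1 : 1 ≤ k) (hk2 : k ≤ n - 1) (hkm : k ≠ n / 2) :
    ∑ t ∈ Finset.range (n / 4), 2 * Real.cos ((4 * (t : ℝ) + 2) * alphaAng n k)
      = 1 + ∑ t ∈ Finset.Icc 1 (n / 4 - 1), 2 * Real.cos (4 * (t : ℝ) * alphaAng n k) := by
  set α := alphaAng n k with hα
  have pi_pos := Real.pi_pos
  obtain ⟨m, hm⟩ : ∃ m, n = 4 * m := ⟨n / 4, (Nat.div_mul_cancel (Nat.dvd_of_mod_eq_zero h4)).symm.trans (by ring)⟩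
  have hm2 : 2 ≤ m := by omega
  have hn4 : n / 4 = m := by omega
  have hnhalf : n / 2 = 2 * m := by omega
  -- basic facts about α
  -- sin (2α) ≠ 0
  have h2α : 2 * α = (2 * (k:ℝ) - 1) * Real.pi / ((n:ℝ) - 1) := by
    rw [hα]; unfold alphaAng
    have : (n:ℝ) - 1 ≠ 0 := by
      have : (8:ℝ) ≤ (n:ℝ) := by exact_mod_cast h8
      linarith
    field_simp
  have hden : (0:ℝ) < (n:ℝ) - 1 := by
    have : (8:ℝ) ≤ (n:ℝ) := by exact_mod_cast h8
    linarith
  have hnum : (0:ℝ) < 2 * (k:ℝ) - 1 := by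
    have : (1:ℝ) ≤ (k:ℝ) := by exact_mod_cast hk1
    linarith
  have h2αpos : 0 < 2 * α := by
    rw [h2α]; positivity
  have h2αlt : 2 * α < 2 * Real.pi := by
    rw [h2α, div_lt_iff₀ hden]
    have hk' : (k:ℝ) ≤ (n:ℝ) - 1 := by
      have : ((k:ℕ):ℝ) ≤ ((n-1 : ℕ):ℝ) := by exact_mod_cast hk2
      have : ((n-1:ℕ):ℝ) = (n:ℝ) - 1 := by push_cast [Nat.cast_sub (by omega : 1 ≤ n)]; ring
      linarith [this ▸ ‹((k:ℕ):ℝ) ≤ ((n-1 : ℕ):ℝ)›]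
    nlinarith
  have h2αne : 2 * α ≠ Real.pi := by
    rw [h2α]
    intro h
    rw [div_eq_iff (ne_of_gt hden)] at h
    have h' : π * (2*(k:ℝ)-1) = π * ((n:ℝ)-1) := by linear_combination h
    have : (2 * (k:ℝ) - 1) = (n:ℝ) - 1 := mul_left_cancel₀ (ne_of_gt pi_pos) h'
    have hkr : 2 * (k:ℝ) = (n:ℝ) := by linarith
    have : 2 * k = n := by exact_mod_cast hkr
    omega
  have hsin : Real.sin (2 * α) ≠ 0 := by
    intro h
    rw [Real.sin_eq_zero_iff] at h
    obtain ⟨j, hj⟩ := h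
    have hj0 : 0 < j := by
      by_contra hc
      push_neg at hc
      have : (j:ℝ) * Real.pi ≤ 0 := by
        have : (j:ℝ) ≤ 0 := by exact_mod_cast hc
        nlinarith
      linarith [hj ▸ this, h2αpos]
    have hj2 : j < 2 := by
      by_contra hc
      push_neg at hc
      have : (2:ℝ) * Real.pi ≤ (j:ℝ) * Real.pi := by
        have : (2:ℝ) ≤ (j:ℝ) := by exact_mod_cast hc
        nlinarith
      linarith [hj ▸ this, h2αlt]
    have : j = 1 := by omega
    rw [this] at hj
    simp at hj
    exact h2αne hj.symm
  -- the key angle identity: (8m-2) * α = (2k-1) * π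
  have hkey : (8 * (m:ℝ) - 2) * α = (2 * (k:ℝ) - 1) * Real.pi := by
    rw [hα]; unfold alphaAng
    have hnr : (n:ℝ) = 4*(m:ℝ) := by rw [hm]; push_cast; ring
    have hmr : (2:ℝ) ≤ (m:ℝ) := by exact_mod_cast hm2
    rw [hnr]
    have hne : 2 * (4*(m:ℝ) - 1) ≠ 0 := by nlinarith
    rw [mul_div_assoc', div_eq_iff hne]
    ring
  -- sin(4mα) = sin((4m-2)α)
  have hsineq : Real.sin (4 * (m:ℝ) * α) = Real.sin ((4 * ((m:ℝ) - 1) + 2) * α) := by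
    have h1 : 4 * (m:ℝ) * α = (2 * (k:ℝ) - 1) * Real.pi - (4 * ((m:ℝ) - 1) + 2) * α := by
      rw [← hkey]; ring
    rw [h1, Real.sin_sub]
    have hs : Real.sin ((2 * (k:ℝ) - 1) * Real.pi) = 0 := by
      have : (2 * (k:ℝ) - 1) * Real.pi = ((2*k-1 : ℕ):ℝ) * Real.pi := by
        push_cast [Nat.cast_sub (by omega : 1 ≤ 2*k)]; ring
      rw [this, Real.sin_nat_mul_pi]
    have hc : Real.cos ((2 * (k:ℝ) - 1) * Real.pi) = -1 := by
      have : (2 * (k:ℝ) - 1) * Real.pi = (k:ℝ) * (2 * Real.pi) - Real.pi := by ring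
      rw [this, Real.cos_sub, Real.cos_pi, Real.sin_pi]
      rw [show ((k:ℝ) * (2*Real.pi)) = ((k:ℕ):ℝ) * (2*Real.pi) by norm_num, Real.cos_nat_mul_two_pi]
      ring
    rw [hs, hc]; ring
  -- assemble
  apply mul_right_cancel₀ hsin
  rw [hn4, tel_c α m]
  have hIcc : ∑ t ∈ Finset.Icc 1 (m - 1), 2 * Real.cos (4 * (t : ℝ) * α)
      = ∑ t ∈ Finset.range (m-1), 2 * Real.cos (4 * ((t:ℝ)+1) * α) := by
    rw [show Finset.Icc 1 (m-1) = Finset.Ico 1 ((m-1)+1) by rfl, Finset.sum_Ico_eq_sum_range]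
    simp only [Nat.add_sub_cancel]
    apply Finset.sum_congr rfl
    intro t _
    push_cast
    ring_nf
  rw [hIcc, tel_a α (m-1)]
  have : (4 * ((m-1 : ℕ):ℝ) + 2) = (4 * ((m:ℝ) - 1) + 2) := by
    push_cast [Nat.cast_sub (by omega : 1 ≤ m)]; ring
  rw [this, hsineq]
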